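/- Let u_s be C² on the closure of Ω and let v be C¹ on the closure of Ω with v = 0 on {y = 0} ∪ {y = 2}. Then ∫_Ω ( −u_s ∂_y v + v ∂_y u_s ) (−∂_y v) + ∫_Ω u_s |∂_x v|² = ∫_Ω u_s ( |∂_y v|² + |∂_x v|² ) + (1/2) ∫_Ω (∂_{yy} u_s) v². -/

import Mathlib

open MeasureTheory Set Real Function

noncomputable section

/-- The channel domain `Ω = (0,L) × (0,2)`. -/
def Omg (L : ℝ) : Set (ℝ × ℝ) := Ioo (0:ℝ) L ×ˢ Ioo (0:ℝ) 2

/-- Partial derivative in the first (x) variable of a curried function. -/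
def pdx (f : ℝ → ℝ → ℝ) : ℝ → ℝ → ℝ := fun x y => deriv (fun s => f s y) x

/-- Partial derivative in the second (y) variable of a curried function. -/
def pdy (f : ℝ → ℝ → ℝ) : ℝ → ℝ → ℝ := fun x y => deriv (fun t => f x t) y

/-- Laplacian `Δ = ∂ₓₓ + ∂_{yy}`. -/
def plap (f : ℝ → ℝ → ℝ) : ℝ → ℝ → ℝ := fun x y => pdx (pdx f) x y + pdy (pdy f) x y

/-- Integral over `Ω`. -/
def intO (L : ℝ) (F : ℝ → ℝ → ℝ) : ℝ := ∫ p in Omg L, F p.1 p.2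

/-- `L²(Ω)` norm. -/
def l2 (L : ℝ) (f : ℝ → ℝ → ℝ) : ℝ := Real.sqrt (intO L fun x y => (f x y)^2)

/-- `L^∞(Ω)` (sup) norm. -/
def supO (L : ℝ) (f : ℝ → ℝ → ℝ) : ℝ := sSup ((fun p : ℝ × ℝ => |f p.1 p.2|) '' Omg L)

/-- `|∇f|²`. -/
def gradSq (f : ℝ → ℝ → ℝ) (x y : ℝ) : ℝ := (pdx f x y)^2 + (pdy f x y)^2

/-- Energy norm `‖u,v‖_E = ‖√ε ∇u‖_{L²(Ω)} + ‖√ε ∇v‖_{L²(Ω)}`. -/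
def normE (ε L : ℝ) (u v : ℝ → ℝ → ℝ) : ℝ :=
  Real.sqrt (intO L fun x y => ε * gradSq u x y) + Real.sqrt (intO L fun x y => ε * gradSq v x y)

/-- Positivity norm `‖u,v‖_P = ‖√(u_s) ∇v‖_{L²(Ω)}`. -/
def normP (L : ℝ) (us v : ℝ → ℝ → ℝ) : ℝ :=
  Real.sqrt (intO L fun x y => us x y * gradSq v x y)

/-- The `X` norm `‖u,v‖_X = ‖u,v‖_E + ε^{γ/2}(‖√ε u‖_∞ + ‖√ε v‖_∞)`. -/
def normX (ε γ L : ℝ) (u v : ℝ → ℝ → ℝ) : ℝ :=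
  normE ε L u v + ε ^ (γ/2) *
    (supO L (fun x y => Real.sqrt ε * u x y) + supO L (fun x y => Real.sqrt ε * v x y))

/-- Linearized convection term `S_u`. -/
def Su (us vs u v : ℝ → ℝ → ℝ) (x y : ℝ) : ℝ :=
  us x y * pdx u x y + pdx us x y * u x y + pdy us x y * v x y + vs x y * pdy u x y

/-- Linearized convection term `S_v`. -/
def Sv (us vs u v : ℝ → ℝ → ℝ) (x y : ℝ) : ℝ :=
  us x y * pdx v x y + pdx vs x y * u x y + vs x y * pdy v x y + pdy vs x y * v x y

/-- The `W^{100,∞}` norm of a function on `(0,2)`. -/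
def W100 (h : ℝ → ℝ) : ℝ :=
  sSup { r : ℝ | ∃ j ≤ 100, ∃ y ∈ Ioo (0:ℝ) 2, r = |deriv^[j] h y| }

/-- directional (y) derivative as a function of the point -/
def Gd18 (f : ℝ × ℝ → ℝ) : ℝ × ℝ → ℝ := fun p => fderiv ℝ f p (0, 1)
def Gx18 (f : ℝ × ℝ → ℝ) : ℝ × ℝ → ℝ := fun p => fderiv ℝ f p (1, 0)

lemma aux18_hasDerivAt_snd {f : ℝ × ℝ → ℝ} (hf : Differentiable ℝ f) (x y : ℝ) :
    HasDerivAt (fun t => f (x, t)) (Gd18 f (x, y)) y := by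
  have h1 : HasDerivAt (fun t : ℝ => ((x, t) : ℝ × ℝ)) (0, 1) y :=
    (hasDerivAt_const y x).prodMk (hasDerivAt_id y)
  exact (hf (x, y)).hasFDerivAt.comp_hasDerivAt y h1

lemma aux18_hasDerivAt_fst {f : ℝ × ℝ → ℝ} (hf : Differentiable ℝ f) (x y : ℝ) :
    HasDerivAt (fun s => f (s, y)) (Gx18 f (x, y)) x := by
  have h1 : HasDerivAt (fun s : ℝ => ((s, y) : ℝ × ℝ)) (1, 0) x :=
    (hasDerivAt_id x).prodMk (hasDerivAt_const x y)
  exact (hf (x, y)).hasFDerivAt.comp_hasDerivAt x h1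

lemma aux18_contDiff_Gd18 {f : ℝ × ℝ → ℝ} {n : ℕ∞} (hf : ContDiff ℝ (n + 1) f) :
    ContDiff ℝ n (Gd18 f) :=
  (ContinuousLinearMap.apply ℝ ℝ ((0:ℝ), (1:ℝ))).contDiff.comp (hf.fderiv_right le_rfl)

lemma aux18_continuous_Gd18 {f : ℝ × ℝ → ℝ} (hf : ContDiff ℝ 1 f) : Continuous (Gd18 f) :=
  ((ContinuousLinearMap.apply ℝ ℝ ((0:ℝ), (1:ℝ))).continuous).comp (hf.continuous_fderiv one_ne_zero)

lemma aux18_continuous_Gx18 {f : ℝ × ℝ → ℝ} (hf : ContDiff ℝ 1 f) : Continuous (Gx18 f) :=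
  ((ContinuousLinearMap.apply ℝ ℝ ((1:ℝ), (0:ℝ))).continuous).comp (hf.continuous_fderiv one_ne_zero)

lemma aux18_integrableOn_Omg {F : ℝ × ℝ → ℝ} (hF : Continuous F) (L : ℝ) :
    IntegrableOn F (Omg L) := by
  have hc : IsCompact (Icc (0:ℝ) L ×ˢ Icc (0:ℝ) 2) := isCompact_Icc.prod isCompact_Icc
  exact (hF.continuousOn.integrableOn_compact hc).mono_set
    (Set.prod_mono Ioo_subset_Icc_self Ioo_subset_Icc_self)


/-- the coercivity identity for the Rayleigh part of the linearized
operator under the multiplier `(−∂_y v, ∂_x v)`. -/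
theorem stmt18 (L : ℝ) (hL0 : 0 < L) (hL1 : L ≤ 1)
    (us v : ℝ → ℝ → ℝ)
    (hus : ContDiff ℝ 2 (uncurry us)) (hv : ContDiff ℝ 1 (uncurry v))
    (hbc : ∀ x ∈ Icc (0:ℝ) L, v x 0 = 0 ∧ v x 2 = 0) :
    intO L (fun x y => (-(us x y * pdy v x y) + v x y * pdy us x y) * (-(pdy v x y)))
      + intO L (fun x y => us x y * (pdx v x y)^2)
    = intO L (fun x y => us x y * ((pdy v x y)^2 + (pdx v x y)^2))
      + (1/2) * intO L (fun x y => pdy (pdy us) x y * (v x y)^2) := by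
  have hvd : Differentiable ℝ (uncurry v) := hv.differentiable one_ne_zero
  have husd : Differentiable ℝ (uncurry us) := hus.differentiable (by norm_num)
  have hG1 : ContDiff ℝ 1 (Gd18 (uncurry us)) := aux18_contDiff_Gd18 (n := 1) (by norm_num at hus ⊢; exact hus)
  have hG1d : Differentiable ℝ (Gd18 (uncurry us)) := hG1.differentiable one_ne_zero
  -- pointwise identification of the pd's
  have hpdyv : ∀ x y : ℝ, pdy v x y = Gd18 (uncurry v) (x, y) :=
    fun x y => (aux18_hasDerivAt_snd hvd x y).deriv
  have hpdxv : ∀ x y : ℝ, pdx v x y = Gx18 (uncurry v) (x, y) :=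
    fun x y => (aux18_hasDerivAt_fst hvd x y).deriv
  have hpdyus : ∀ x y : ℝ, pdy us x y = Gd18 (uncurry us) (x, y) :=
    fun x y => (aux18_hasDerivAt_snd husd x y).deriv
  have hdy2 : ∀ x y : ℝ, HasDerivAt (fun t => pdy us x t) (Gd18 (Gd18 (uncurry us)) (x, y)) y := by
    intro x y
    have : (fun t => pdy us x t) = fun t => Gd18 (uncurry us) (x, t) :=
      funext fun t => hpdyus x t
    rw [this]
    exact aux18_hasDerivAt_snd hG1d x y
  have hpdyyus : ∀ x y : ℝ, pdy (pdy us) x y = Gd18 (Gd18 (uncurry us)) (x, y) :=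
    fun x y => (hdy2 x y).deriv
  -- continuity facts
  have cus : Continuous (fun p : ℝ × ℝ => us p.1 p.2) := hus.continuous
  have cv : Continuous (fun p : ℝ × ℝ => v p.1 p.2) := hv.continuous
  have cG1 : Continuous (Gd18 (uncurry us)) := hG1.continuous
  have cG2 : Continuous (Gd18 (Gd18 (uncurry us))) := aux18_continuous_Gd18 hG1
  have cGV : Continuous (Gd18 (uncurry v)) := aux18_continuous_Gd18 hv
  have cGX : Continuous (Gx18 (uncurry v)) := aux18_continuous_Gx18 hv
  have hmO : MeasurableSet (Omg L) := (measurableSet_Ioo.prod measurableSet_Ioo)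
  -- integrability of the pieces
  have ia : IntegrableOn (fun p : ℝ × ℝ => us p.1 p.2 * (pdy v p.1 p.2)^2) (Omg L) := by
    have : (fun p : ℝ × ℝ => us p.1 p.2 * (pdy v p.1 p.2)^2)
        = fun p => us p.1 p.2 * (Gd18 (uncurry v) p)^2 := by
      funext p; simp [hpdyv]
    rw [this]; exact aux18_integrableOn_Omg (cus.mul (cGV.pow 2)) L
  have ib : IntegrableOn (fun p : ℝ × ℝ => pdy us p.1 p.2 * v p.1 p.2 * pdy v p.1 p.2) (Omg L) := by
    have : (fun p : ℝ × ℝ => pdy us p.1 p.2 * v p.1 p.2 * pdy v p.1 p.2)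
        = fun p => Gd18 (uncurry us) p * v p.1 p.2 * Gd18 (uncurry v) p := by
      funext p; simp [hpdyv, hpdyus]
    rw [this]; exact aux18_integrableOn_Omg ((cG1.mul cv).mul cGV) L
  have ic : IntegrableOn (fun p : ℝ × ℝ => us p.1 p.2 * (pdx v p.1 p.2)^2) (Omg L) := by
    have : (fun p : ℝ × ℝ => us p.1 p.2 * (pdx v p.1 p.2)^2)
        = fun p => us p.1 p.2 * (Gx18 (uncurry v) p)^2 := by
      funext p; simp [hpdxv]
    rw [this]; exact aux18_integrableOn_Omg (cus.mul (cGX.pow 2)) L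
  have id2 : IntegrableOn (fun p : ℝ × ℝ => pdy (pdy us) p.1 p.2 * (v p.1 p.2)^2) (Omg L) := by
    have : (fun p : ℝ × ℝ => pdy (pdy us) p.1 p.2 * (v p.1 p.2)^2)
        = fun p => Gd18 (Gd18 (uncurry us)) p * (v p.1 p.2)^2 := by
      funext p; simp [hpdyyus]
    rw [this]; exact aux18_integrableOn_Omg (cG2.mul (cv.pow 2)) L
  -- the key integration-by-parts identity
  have key : intO L (fun x y => pdy us x y * v x y * pdy v x y
      + 1/2 * (pdy (pdy us) x y * (v x y)^2)) = 0 := by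
    rw [intO]
    have hKc : Continuous (fun p : ℝ × ℝ => Gd18 (uncurry us) p * v p.1 p.2 * Gd18 (uncurry v) p
        + 1/2 * (Gd18 (Gd18 (uncurry us)) p * (v p.1 p.2)^2)) :=
      ((cG1.mul cv).mul cGV).add (continuous_const.mul (cG2.mul (cv.pow 2)))
    have hrw : (fun p : ℝ × ℝ => pdy us p.1 p.2 * v p.1 p.2 * pdy v p.1 p.2
        + 1/2 * (pdy (pdy us) p.1 p.2 * (v p.1 p.2)^2))
        = fun p => Gd18 (uncurry us) p * v p.1 p.2 * Gd18 (uncurry v) p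
        + 1/2 * (Gd18 (Gd18 (uncurry us)) p * (v p.1 p.2)^2) := by
      funext p; simp [hpdyv, hpdyus, hpdyyus]
    rw [hrw]
    rw [show Omg L = Ioo (0:ℝ) L ×ˢ Ioo (0:ℝ) 2 from rfl]
    rw [MeasureTheory.Measure.volume_eq_prod]
    rw [MeasureTheory.setIntegral_prod _ (by
      rw [← MeasureTheory.Measure.volume_eq_prod]
      exact aux18_integrableOn_Omg hKc L)]
    have inner0 : ∀ x ∈ Ioo (0:ℝ) L,
        (∫ y in Ioo (0:ℝ) 2, (Gd18 (uncurry us) (x, y) * v x y * Gd18 (uncurry v) (x, y)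
          + 1/2 * (Gd18 (Gd18 (uncurry us)) (x, y) * (v x y)^2))) = 0 := by
      intro x hx
      rw [← MeasureTheory.integral_Ioc_eq_integral_Ioo,
        ← intervalIntegral.integral_of_le (by norm_num : (0:ℝ) ≤ 2)]
      have hFTC : ∫ t in (0:ℝ)..2, (Gd18 (uncurry us) (x, t) * v x t * Gd18 (uncurry v) (x, t)
          + 1/2 * (Gd18 (Gd18 (uncurry us)) (x, t) * (v x t)^2))
          = (Gd18 (uncurry us) (x, 2) * (v x 2)^2 / 2) - (Gd18 (uncurry us) (x, 0) * (v x 0)^2 / 2) := by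
        apply intervalIntegral.integral_eq_sub_of_hasDerivAt
          (f := fun t => Gd18 (uncurry us) (x, t) * (v x t)^2 / 2)
        · intro t _
          have hA : HasDerivAt (fun t => Gd18 (uncurry us) (x, t)) (Gd18 (Gd18 (uncurry us)) (x, t)) t :=
            aux18_hasDerivAt_snd hG1d x t
          have hB : HasDerivAt (fun t => v x t) (Gd18 (uncurry v) (x, t)) t :=
            aux18_hasDerivAt_snd hvd x t
          have := (hA.mul (hB.pow 2)).div_const 2
          refine this.congr_deriv ?_
          simp only [Pi.pow_apply]
          push_cast
          ring
        · exact (hKc.comp (Continuous.prodMk_right x)).intervalIntegrable 0 2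
      rw [hFTC, (hbc x (Set.mem_Icc.2 ⟨le_of_lt hx.1, hx.2.le⟩)).1,
        (hbc x (Set.mem_Icc.2 ⟨le_of_lt hx.1, hx.2.le⟩)).2]
      ring
    rw [MeasureTheory.setIntegral_congr_fun measurableSet_Ioo inner0]
    simp
  -- split key using linearity
  have e3 : intO L (fun x y => pdy us x y * v x y * pdy v x y
      + 1/2 * (pdy (pdy us) x y * (v x y)^2))
      = intO L (fun x y => pdy us x y * v x y * pdy v x y)
        + 1/2 * intO L (fun x y => pdy (pdy us) x y * (v x y)^2) := by
    rw [intO, intO, intO]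
    rw [MeasureTheory.integral_add ib (id2.const_mul (1/2 : ℝ))]
    rw [MeasureTheory.integral_const_mul]
  -- rewrite LHS first integral
  have e1 : intO L (fun x y => (-(us x y * pdy v x y) + v x y * pdy us x y) * (-(pdy v x y)))
      = intO L (fun x y => us x y * (pdy v x y)^2)
        - intO L (fun x y => pdy us x y * v x y * pdy v x y) := by
    rw [intO, intO, intO, ← MeasureTheory.integral_sub ia ib]
    apply MeasureTheory.setIntegral_congr_fun hmO
    intro p _
    ring
  have e2 : intO L (fun x y => us x y * ((pdy v x y)^2 + (pdx v x y)^2))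
      = intO L (fun x y => us x y * (pdy v x y)^2)
        + intO L (fun x y => us x y * (pdx v x y)^2) := by
    rw [intO, intO, intO, ← MeasureTheory.integral_add ia ic]
    apply MeasureTheory.setIntegral_congr_fun hmO
    intro p _
    ring
  linarith [key, e1, e2, e3]
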